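/- Let a and b be unit vectors in ℝ³ with 0 < |⟨a, b⟩| < 1. Then there is a finite set Γ of unit vectors in ℝ³, closed under negation, with a, b ∈ Γ, such that every state p on Γ with p(a) = 1 satisfies 0 < p(b) < 1. -/

import Mathlib

/-- A state on a finite set `Γ` of unit vectors in `ℝ³` (closed under negation):
a function `p : ℝ³ → ℝ` that is nonnegative on `Γ`, satisfies `p (-x) = p x` on `Γ`,
and `p x + p y + p z = 1` for every triple of mutually orthogonal vectors of `Γ`. -/
def IsStateOn (Γ : Finset (EuclideanSpace ℝ (Fin 3)))
    (p : EuclideanSpace ℝ (Fin 3) → ℝ) : Prop :=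
  (∀ x ∈ Γ, 0 ≤ p x) ∧ (∀ x ∈ Γ, p (-x) = p x) ∧
  ∀ x ∈ Γ, ∀ y ∈ Γ, ∀ z ∈ Γ, (inner ℝ x y : ℝ) = 0 → (inner ℝ x z : ℝ) = 0 →
    (inner ℝ y z : ℝ) = 0 → p x + p y + p z = 1


noncomputable section KSProof
open scoped RealInnerProductSpace

private abbrev E3 := EuclideanSpace ℝ (Fin 3)

/-- Cross product on `ℝ³`. -/
private def cp (u v : E3) : E3 :=
  (WithLp.equiv 2 _).symm ![u 1 * v 2 - u 2 * v 1, u 2 * v 0 - u 0 * v 2, u 0 * v 1 - u 1 * v 0]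

private lemma inner_cp_left (u v : E3) : ⟪cp u v, u⟫ = 0 := by
  simp [cp, PiLp.inner_apply, Fin.sum_univ_three]; ring

private lemma inner_cp_right (u v : E3) : ⟪cp u v, v⟫ = 0 := by
  simp [cp, PiLp.inner_apply, Fin.sum_univ_three]; ring

private lemma inner_cp_self (u v : E3) :
    ⟪cp u v, cp u v⟫ = ⟪u,u⟫ * ⟪v,v⟫ - ⟪u,v⟫ * ⟪u,v⟫ := by
  simp only [PiLp.inner_apply]; simp [cp, Fin.sum_univ_three]; ring

private lemma IsStateOn.mono {S Γ : Finset E3} {p : E3 → ℝ} (hS : S ⊆ Γ)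
    (h : IsStateOn Γ p) : IsStateOn S p :=
  ⟨fun x hx => h.1 x (hS hx), fun x hx => h.2.1 x (hS hx),
   fun x hx y hy z hz o1 o2 o3 => h.2.2 x (hS hx) y (hS hy) z (hS hz) o1 o2 o3⟩

private lemma state_triple {Γ : Finset E3} {p : E3 → ℝ} (h : IsStateOn Γ p) {u v w : E3}
    (hu : u ∈ Γ) (hv : v ∈ Γ) (hw : w ∈ Γ)
    (o1 : ⟪u,v⟫ = 0) (o2 : ⟪u,w⟫ = 0) (o3 : ⟪v,w⟫ = 0) :
    p u + p v + p w = 1 :=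
  h.2.2 u hu v hv w hw o1 o2 o3

private lemma force_zero {Γ : Finset E3} {p : E3 → ℝ} (h : IsStateOn Γ p) {u v w : E3}
    (hu : u ∈ Γ) (hv : v ∈ Γ) (hw : w ∈ Γ)
    (o1 : ⟪u,v⟫ = 0) (o2 : ⟪u,w⟫ = 0) (o3 : ⟪v,w⟫ = 0) (h1 : p u = 1) :
    p v = 0 ∧ p w = 0 := by
  have hs := state_triple h hu hv hw o1 o2 o3
  have n1 := h.1 v hv; have n2 := h.1 w hw
  constructor <;> linarith

private lemma force_one {Γ : Finset E3} {p : E3 → ℝ} (h : IsStateOn Γ p) {u v w : E3}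
    (hu : u ∈ Γ) (hv : v ∈ Γ) (hw : w ∈ Γ)
    (o1 : ⟪u,v⟫ = 0) (o2 : ⟪u,w⟫ = 0) (o3 : ⟪v,w⟫ = 0)
    (h1 : p v = 0) (h2 : p w = 0) : p u = 1 := by
  have hs := state_triple h hu hv hw o1 o2 o3; linarith

private lemma norm_of_inner_one {x : E3} (h : ⟪x,x⟫ = (1:ℝ)) : ‖x‖ = 1 := by
  have h2 : ⟪x,x⟫ = ‖x‖ * ‖x‖ := real_inner_self_eq_norm_mul_norm x
  nlinarith [norm_nonneg x]

private lemma cp_left' (u v : E3) : ⟪u, cp u v⟫ = 0 := by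
  rw [real_inner_comm]; exact inner_cp_left u v
private lemma cp_right' (u v : E3) : ⟪v, cp u v⟫ = 0 := by
  rw [real_inner_comm]; exact inner_cp_right u v

private lemma unit_inv_smul {r : ℝ} {v : E3} (hr : 0 < r) (hv : ⟪v,v⟫ = r^2) :
    ⟪r⁻¹ • v, r⁻¹ • v⟫ = 1 := by
  rw [real_inner_smul_left, real_inner_smul_right, hv]
  field_simp

private lemma exists_frame (P Q : E3) (c s : ℝ) (hPP : ⟪P,P⟫ = 1) (hQQ : ⟪Q,Q⟫ = 1)
    (hPQ : ⟪P,Q⟫ = c) (hs : 0 < s) (hcs : c^2 + s^2 = 1) :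
    ∃ e2 e3 : E3, ⟪e2,e2⟫ = 1 ∧ ⟪e3,e3⟫ = 1 ∧ ⟪P,e2⟫ = 0 ∧ ⟪P,e3⟫ = 0 ∧
      ⟪e2,e3⟫ = 0 ∧ Q = c • P + s • e2 ∧ ⟪Q,e2⟫ = s ∧ ⟪Q,e3⟫ = 0 := by
  have hsne : s ≠ 0 := hs.ne'
  set e2 : E3 := s⁻¹ • (Q - c • P) with he2
  have hQP : ⟪Q,P⟫ = c := by rw [real_inner_comm]; exact hPQ
  have hE22 : ⟪e2,e2⟫ = 1 := by
    simp only [he2, inner_sub_left, inner_sub_right, real_inner_smul_left,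
      real_inner_smul_right, hPP, hQQ, hPQ, hQP]
    field_simp
    nlinarith [hcs]
  have hPE2 : ⟪P,e2⟫ = 0 := by
    simp only [he2, inner_sub_right, real_inner_smul_right, hPP, hPQ]
    ring
  have hQeq : Q = c • P + s • e2 := by
    rw [he2, smul_smul, mul_inv_cancel₀ hsne, one_smul]
    abel
  set e3 : E3 := cp P e2 with he3
  have hE33 : ⟪e3,e3⟫ = 1 := by
    rw [he3, inner_cp_self, hPP, hE22, hPE2]; ring
  have hPE3 : ⟪P,e3⟫ = 0 := by rw [real_inner_comm, he3]; exact inner_cp_left P e2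
  have hE23 : ⟪e2,e3⟫ = 0 := by rw [real_inner_comm, he3]; exact inner_cp_right P e2
  refine ⟨e2, e3, hE22, hE33, hPE2, hPE3, hE23, hQeq, ?_, ?_⟩
  · rw [hQeq]
    simp only [inner_add_left, real_inner_smul_left, hPE2, hE22]; ring
  · rw [hQeq]
    simp only [inner_add_left, real_inner_smul_left, hPE3, hE23]; ring

lemma base_scalars (c s : ℝ) (hc0 : 0 < c) (hc13 : c ≤ 1/3) (hs : 0 < s)
    (hcs : c^2 + s^2 = 1) :
    ∃ α β : ℝ, α^2 + β^2 = 1 ∧ s^2*α^2 < 1 ∧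
      s^2*α^2 + 3*s^2 - Real.sqrt 3*(s^2*(α*β)) = 4 := by
  have hc2p : (0:ℝ) < c^2 := by positivity
  have hs2p : (0:ℝ) < s^2 := by positivity
  have hs2le : s^2 < 1 := by linarith
  have h3 : (Real.sqrt 3)^2 = 3 := Real.sq_sqrt (by norm_num)
  have h3pos : (0:ℝ) < Real.sqrt 3 := Real.sqrt_pos.2 (by norm_num)
  set W : ℝ := 1 + 4*c^2/s^2 with hW
  have hWs : W * s^2 = 4*c^2 + s^2 := by rw [hW]; field_simp; ring
  have hW1 : 1 < W := by
    rw [hW]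
    have := div_pos (by positivity : (0:ℝ) < 4*c^2) hs2p
    linarith
  have hW32 : W ≤ 3/2 := by
    rw [hW]
    have h8 : 4*c^2/s^2 ≤ 1/2 := by
      rw [div_le_iff₀ hs2p]
      nlinarith [mul_nonneg (by linarith : (0:ℝ) ≤ 1/3 - c) (by linarith : (0:ℝ) ≤ 1/3 + c)]
    linarith
  clear hW
  clear_value W
  have hc19 : c^2 ≤ 1/9 := by
    nlinarith [mul_nonneg (by linarith : (0:ℝ) ≤ 1/3 - c) (by linarith : (0:ℝ) ≤ 1/3 + c)]
  have hdisc : (0:ℝ) ≤ 9 + 12*W - 12*W^2 := by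
    nlinarith [mul_nonneg (by linarith : (0:ℝ) ≤ 3-2*W) (by linarith : (0:ℝ) ≤ 1+2*W)]
  set D := Real.sqrt (9+12*W-12*W^2) with hD
  have hDnn : 0 ≤ D := Real.sqrt_nonneg _
  have hD2 : D^2 = 9+12*W-12*W^2 := Real.sq_sqrt hdisc
  have hsq : 9+12*W-12*W^2 ≤ (5-2*W)^2 := by nlinarith [sq_nonneg (1-W)]
  have hDle : D ≤ 5-2*W := by
    calc D ≤ Real.sqrt ((5-2*W)^2) := Real.sqrt_le_sqrt hsq
      _ = 5-2*W := Real.sqrt_sq (by linarith)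
  clear hD
  clear_value D
  set u := (3*(1-2*W) + D)/8 with hu
  have h8u : 8*u = 3*(1-2*W) + D := by rw [hu]; ring
  have hquad : 4*u^2 - 3*u*(1-2*W) - 3*(W-W^2) = 0 := by
    have h8sq : (8*u - 3*(1-2*W))^2 = 9+12*W-12*W^2 := by
      rw [h8u, show 3*(1-2*W) + D - 3*(1-2*W) = D by ring]; exact hD2
    linear_combination (1/16) * h8sq
  clear hu
  clear_value u
  have hWu0 : 0 < W + u := by linarith
  have hWu1 : W + u ≤ 1 := by linarith
  set α := Real.sqrt (W+u) with hα
  have hα2 : α^2 = W + u := Real.sq_sqrt hWu0.le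
  have hαpos : 0 < α := Real.sqrt_pos.2 hWu0
  have hα21 : α^2 ≤ 1 := by rw [hα2]; exact hWu1
  set β := u / (Real.sqrt 3 * α) with hβ
  have hβu : Real.sqrt 3 * α * β = u := by
    rw [hβ]; field_simp
  clear hβ hα
  clear_value α β
  have hab1 : α^2 + β^2 = 1 := by
    have h30 : (0:ℝ) < 3*α^2 := by positivity
    have hqq : 3*α^2*(α^2+β^2-1) = 0 := by
      linear_combination (Real.sqrt 3*α*β + u) * hβu + (-(α^2*β^2)) * h3 +
        (3*(α^2 + W + u) - 3) * hα2 + hquad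
    have := mul_eq_zero.mp hqq
    rcases this with h|h
    · exact absurd h h30.ne'
    · linarith
  refine ⟨α, β, hab1, ?_, ?_⟩
  · nlinarith [hα21, hs2le, hs2p, sq_nonneg α]
  · linear_combination s^2*hα2 - s^2*hβu + hWs + 4*hcs

lemma base_gadget (P Q : E3) (c s : ℝ) (hPP : ⟪P,P⟫ = 1) (hQQ : ⟪Q,Q⟫ = 1)
    (hPQ : ⟪P,Q⟫ = c) (hc0 : 0 < c) (hc13 : c ≤ 1/3) (hs : 0 < s)
    (hcs : c^2 + s^2 = 1) :
    ∃ S : Finset E3, P ∈ S ∧ Q ∈ S ∧ (∀ x ∈ S, ⟪x,x⟫ = (1:ℝ)) ∧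
      ∀ p, IsStateOn S p → p P = 1 → p Q = 1 → False := by
  classical
  obtain ⟨e2, e3, hE22, hE33, hPE2, hPE3, hE23, hQeq, hQE2, hQE3⟩ :=
    exists_frame P Q c s hPP hQQ hPQ hs hcs
  have hE32 : ⟪e3,e2⟫ = 0 := by rw [real_inner_comm]; exact hE23
  obtain ⟨α, β, hab1, hτlt, hkey⟩ := base_scalars c s hc0 hc13 hs hcs
  have h3 : (Real.sqrt 3)^2 = 3 := Real.sq_sqrt (by norm_num)
  have hc2p : (0:ℝ) < c^2 := by positivity
  -- vectors x, t
  set x : E3 := (Real.sqrt 3/2) • e2 + (1/2 : ℝ) • e3 with hxdef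
  set t : E3 := α • e2 + β • e3 with htdef
  have hxx : ⟪x,x⟫ = 1 := by
    simp only [hxdef, inner_add_left, inner_add_right, real_inner_smul_left,
      real_inner_smul_right, hE22, hE33, hE23, hE32]
    linear_combination (1/4) * h3
  have hPx : ⟪P,x⟫ = 0 := by
    simp only [hxdef, inner_add_right, real_inner_smul_right, hPE2, hPE3]; ring
  have hQx : ⟪Q,x⟫ = Real.sqrt 3/2*s := by
    simp only [hxdef, inner_add_right, real_inner_smul_right, hQE2, hQE3]; ring
  have hxQ : ⟪x,Q⟫ = Real.sqrt 3/2*s := by rw [real_inner_comm]; exact hQx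
  have htt : ⟪t,t⟫ = 1 := by
    simp only [htdef, inner_add_left, inner_add_right, real_inner_smul_left,
      real_inner_smul_right, hE22, hE33, hE23, hE32]
    linear_combination hab1
  have hPt : ⟪P,t⟫ = 0 := by
    simp only [htdef, inner_add_right, real_inner_smul_right, hPE2, hPE3]; ring
  have hQt : ⟪Q,t⟫ = s*α := by
    simp only [htdef, inner_add_right, real_inner_smul_right, hQE2, hQE3]; ring
  have htQ : ⟪t,Q⟫ = s*α := by rw [real_inner_comm]; exact hQt
  have hxt : ⟪x,t⟫ = Real.sqrt 3/2*α + 1/2*β := by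
    simp only [hxdef, htdef, inner_add_left, inner_add_right, real_inner_smul_left,
      real_inner_smul_right, hE22, hE33, hE23, hE32]
    ring
  -- normalizers
  have hrnarg : (0:ℝ) < 1 - 3*s^2/4 := by linarith only [hcs, hc2p]
  set rn := Real.sqrt (1-3*s^2/4) with hrn
  have hrn2 : rn^2 = 1-3*s^2/4 := Real.sq_sqrt hrnarg.le
  have hrnpos : 0 < rn := Real.sqrt_pos.2 hrnarg
  have hrtarg : (0:ℝ) < 1 - s^2*α^2 := by linarith only [hτlt]
  set rt := Real.sqrt (1-s^2*α^2) with hrt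
  have hrt2 : rt^2 = 1-s^2*α^2 := Real.sq_sqrt hrtarg.le
  have hrtpos : 0 < rt := Real.sqrt_pos.2 hrtarg
  set y : E3 := rn⁻¹ • cp Q x with hydef
  set n : E3 := rn⁻¹ • (Q - (Real.sqrt 3/2*s) • x) with hndef
  set t' : E3 := rt⁻¹ • (Q - (s*α) • t) with ht'def
  -- inner facts for y, n, t'
  have hcpQx : ⟪cp Q x, cp Q x⟫ = rn^2 := by
    rw [inner_cp_self, hQQ, hxx, hQx, hrn2]
    linear_combination (-(s^2)/4) * h3
  have hyy : ⟪y,y⟫ = 1 := by rw [hydef]; exact unit_inv_smul hrnpos hcpQx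
  have hsubn : ⟪Q - (Real.sqrt 3/2*s) • x, Q - (Real.sqrt 3/2*s) • x⟫ = rn^2 := by
    simp only [inner_sub_left, inner_sub_right, real_inner_smul_left,
      real_inner_smul_right, hQQ, hQx, hxQ, hxx, hrn2]
    linear_combination (-(s^2)/4) * h3
  have hnn : ⟪n,n⟫ = 1 := by rw [hndef]; exact unit_inv_smul hrnpos hsubn
  have hsubt : ⟪Q - (s*α) • t, Q - (s*α) • t⟫ = rt^2 := by
    simp only [inner_sub_left, inner_sub_right, real_inner_smul_left,
      real_inner_smul_right, hQQ, hQt, htQ, htt, hrt2]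
    ring
  have ht't' : ⟪t',t'⟫ = 1 := by rw [ht'def]; exact unit_inv_smul hrtpos hsubt
  have hQy : ⟪Q,y⟫ = 0 := by
    rw [hydef, real_inner_smul_right, real_inner_comm, inner_cp_left]; ring
  have hxy : ⟪x,y⟫ = 0 := by
    rw [hydef, real_inner_smul_right, real_inner_comm, inner_cp_right]; ring
  have hxn : ⟪x,n⟫ = 0 := by
    rw [hndef, real_inner_smul_right, inner_sub_right, real_inner_smul_right, hxQ, hxx]
    ring
  have hyn : ⟪y,n⟫ = 0 := by
    rw [hydef, hndef, real_inner_smul_left, real_inner_smul_right, inner_sub_right,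
      real_inner_smul_right, inner_cp_left, inner_cp_right]
    ring
  have htt' : ⟪t,t'⟫ = 0 := by
    rw [ht'def, real_inner_smul_right, inner_sub_right, real_inner_smul_right, htQ, htt]
    ring
  have hnt' : ⟪n,t'⟫ = 0 := by
    have hsub : ⟪Q - (Real.sqrt 3/2*s) • x, Q - (s*α) • t⟫ = 0 := by
      simp only [inner_sub_left, inner_sub_right, real_inner_smul_left,
        real_inner_smul_right, hQQ, hQt, hxQ, hxt]
      linear_combination (-(1:ℝ)/4) * hkey + (s^2*α^2/4 - s^2/4) * h3
    rw [hndef, ht'def, real_inner_smul_left, real_inner_smul_right, hsub]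
    ring
  -- Q in span of t, t'
  have hQspan : Q = (s*α) • t + rt • t' := by
    rw [ht'def, smul_smul, mul_inv_cancel₀ hrtpos.ne', one_smul]
    abel
  set mv : E3 := cp t t' with hmvdef
  have hmvmv : ⟪mv,mv⟫ = 1 := by rw [hmvdef, inner_cp_self, htt, ht't', htt']; ring
  have hmvQ : ⟪mv,Q⟫ = 0 := by
    rw [hQspan]
    simp only [hmvdef, inner_add_right, real_inner_smul_right,
      inner_cp_left, inner_cp_right]
    ring
  set qv : E3 := cp mv Q with hqvdef
  have hqvqv : ⟪qv,qv⟫ = 1 := by rw [hqvdef, inner_cp_self, hmvmv, hQQ, hmvQ]; ring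
  -- the finite set
  set S : Finset E3 :=
    {P, Q, x, cp P x, y, cp Q y, n, t, cp P t, t', cp n t', mv, qv} with hSdef
  have mP : P ∈ S := by simp [hSdef]
  have mQ : Q ∈ S := by simp [hSdef]
  have mx : x ∈ S := by simp [hSdef]
  have mPx : cp P x ∈ S := by simp [hSdef]
  have my : y ∈ S := by simp [hSdef]
  have mQy : cp Q y ∈ S := by simp [hSdef]
  have mn : n ∈ S := by simp [hSdef]
  have mt : t ∈ S := by simp [hSdef]
  have mPt : cp P t ∈ S := by simp [hSdef]
  have mt' : t' ∈ S := by simp [hSdef]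
  have mnt' : cp n t' ∈ S := by simp [hSdef]
  have mmv : mv ∈ S := by simp [hSdef]
  have mqv : qv ∈ S := by simp [hSdef]
  refine ⟨S, mP, mQ, ?_, ?_⟩
  · intro z hz
    rw [hSdef] at hz
    simp only [Finset.mem_insert, Finset.mem_singleton] at hz
    rcases hz with rfl|rfl|rfl|rfl|rfl|rfl|rfl|rfl|rfl|rfl|rfl|rfl|rfl
    · exact hPP
    · exact hQQ
    · exact hxx
    · rw [inner_cp_self, hPP, hxx, hPx]; ring
    · exact hyy
    · rw [inner_cp_self, hQQ, hyy, hQy]; ring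
    · exact hnn
    · exact htt
    · rw [inner_cp_self, hPP, htt, hPt]; ring
    · exact ht't'
    · rw [inner_cp_self, hnn, ht't', hnt']; ring
    · exact hmvmv
    · exact hqvqv
  · intro p hp h1P h1Q
    have hx0 : p x = 0 :=
      (force_zero hp mP mx mPx hPx (cp_left' P x) (cp_right' P x) h1P).1
    have hy0 : p y = 0 :=
      (force_zero hp mQ my mQy hQy (cp_left' Q y) (cp_right' Q y) h1Q).1
    have hn1 : p n = 1 := by
      refine force_one hp mn mx my ?_ ?_ hxy hx0 hy0
      · rw [real_inner_comm]; exact hxn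
      · rw [real_inner_comm]; exact hyn
    have ht0 : p t = 0 :=
      (force_zero hp mP mt mPt hPt (cp_left' P t) (cp_right' P t) h1P).1
    have ht'0 : p t' = 0 :=
      (force_zero hp mn mt' mnt' hnt' (cp_left' n t') (cp_right' n t') hn1).1
    have hm1 : p mv = 1 :=
      force_one hp mmv mt mt' (inner_cp_left t t') (inner_cp_right t t') htt' ht0 ht'0
    have hsum := state_triple hp mQ mqv mmv
      (by rw [real_inner_comm, hqvdef]; exact inner_cp_right mv Q)
      (by rw [real_inner_comm]; exact hmvQ)
      (by rw [hqvdef]; exact inner_cp_left mv Q)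
    have hnn0 := hp.1 qv mqv
    linarith only [hsum, hnn0, h1Q, hm1]

lemma step_scalars (ε c s : ℝ) (hε : 0 < ε) (hc13 : 1/3 < c) (hcε : c ≤ 1-ε)
    (hs : 0 < s) (hcs : c^2 + s^2 = 1) :
    0 < c^2/(1-s^2/2) ∧ c^2/(1-s^2/2) ≤ c - ε^2/6 := by
  have hc1 : c < 1 := by linarith
  have hc2 : s^2 = 1 - c^2 := by linarith
  have hden : 0 < 1 - s^2/2 := by nlinarith [sq_nonneg c]
  have hcpos : (0:ℝ) < c := by linarith
  constructor
  · exact div_pos (by positivity) hden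
  · rw [div_le_iff₀ hden]
    have h1c : ε ≤ 1-c := by linarith
    have he2 : ε^2 ≤ (1-c)^2 := by nlinarith
    have hint1 : c*ε^2 ≤ c*(1-c)^2 := by
      exact mul_le_mul_of_nonneg_left he2 (by linarith)
    have hint2 : ε^2*c^2 ≤ ε^2*1 := by
      refine mul_le_mul_of_nonneg_left ?_ (sq_nonneg ε)
      nlinarith
    nlinarith [hint1, hint2]

lemma refuter (ε : ℝ) (hε : 0 < ε) : ∀ (k : ℕ) (P Q : E3), ⟪P,P⟫ = 1 → ⟪Q,Q⟫ = 1 →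
    0 < ⟪P,Q⟫ → ⟪P,Q⟫ ≤ 1-ε → ⟪P,Q⟫ ≤ 1/3 + k*(ε^2/6) →
    ∃ S : Finset E3, P ∈ S ∧ Q ∈ S ∧ (∀ x ∈ S, ⟪x,x⟫ = (1:ℝ)) ∧
      ∀ p, IsStateOn S p → p P = 1 → p Q = 1 → False := by
  intro k
  induction k with
  | zero =>
    intro P Q hPP hQQ hpos hle hbound
    have hc1 : ⟪P,Q⟫ < 1 := by linarith only [hle, hε]
    have hc13 : ⟪P,Q⟫ ≤ 1/3 := by simpa using hbound
    have hsarg : 0 < 1 - ⟪P,Q⟫^2 := by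
      nlinarith [mul_pos (show (0:ℝ) < 1 - ⟪P,Q⟫ by linarith only [hc1])
        (show (0:ℝ) < 1 + ⟪P,Q⟫ by linarith only [hpos])]
    have hs : 0 < Real.sqrt (1 - ⟪P,Q⟫^2) := Real.sqrt_pos.2 hsarg
    have hcs : ⟪P,Q⟫^2 + (Real.sqrt (1 - ⟪P,Q⟫^2))^2 = 1 := by
      rw [Real.sq_sqrt hsarg.le]; ring
    exact base_gadget P Q _ _ hPP hQQ rfl hpos hc13 hs hcs
  | succ k ih =>
    intro P Q hPP hQQ hpos hle hbound
    have hc1 : ⟪P,Q⟫ < 1 := by linarith only [hle, hε]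
    have hsarg : 0 < 1 - ⟪P,Q⟫^2 := by
      nlinarith [mul_pos (show (0:ℝ) < 1 - ⟪P,Q⟫ by linarith only [hc1])
        (show (0:ℝ) < 1 + ⟪P,Q⟫ by linarith only [hpos])]
    have hs : 0 < Real.sqrt (1 - ⟪P,Q⟫^2) := Real.sqrt_pos.2 hsarg
    have hcs : ⟪P,Q⟫^2 + (Real.sqrt (1 - ⟪P,Q⟫^2))^2 = 1 := by
      rw [Real.sq_sqrt hsarg.le]; ring
    by_cases hc13 : ⟪P,Q⟫ ≤ 1/3
    · exact base_gadget P Q _ _ hPP hQQ rfl hpos hc13 hs hcs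
    · push_neg at hc13
      set c := ⟪P,Q⟫ with hcdef
      set s := Real.sqrt (1 - c^2) with hsdef
      classical
      obtain ⟨e2, e3, hE22, hE33, hPE2, hPE3, hE23, hQeq, hQE2, hQE3⟩ :=
        exists_frame P Q c s hPP hQQ rfl hs hcs
      have hE32 : ⟪e3,e2⟫ = 0 := by rw [real_inner_comm]; exact hE23
      have h2 : (Real.sqrt 2)^2 = 2 := Real.sq_sqrt (by norm_num)
      have h2pos : (0:ℝ) < Real.sqrt 2 := Real.sqrt_pos.2 (by norm_num)
      have hi2 : ((Real.sqrt 2)⁻¹)^2 = (2:ℝ)⁻¹ := by rw [inv_pow, h2]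
      set iv := (Real.sqrt 2)⁻¹ with hivdef
      set x1 : E3 := iv • e2 + iv • e3 with hx1def
      set x2 : E3 := iv • e2 - iv • e3 with hx2def
      have hx1x1 : ⟪x1,x1⟫ = 1 := by
        simp only [hx1def, inner_add_left, inner_add_right, real_inner_smul_left,
          real_inner_smul_right, hE22, hE33, hE23, hE32]
        linear_combination 2 * hi2
      have hx2x2 : ⟪x2,x2⟫ = 1 := by
        simp only [hx2def, inner_sub_left, inner_sub_right, real_inner_smul_left,
          real_inner_smul_right, hE22, hE33, hE23, hE32]
        linear_combination 2 * hi2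
      have hx1x2 : ⟪x1,x2⟫ = 0 := by
        simp only [hx1def, hx2def, inner_add_left, inner_sub_right, real_inner_smul_left,
          real_inner_smul_right, hE22, hE33, hE23, hE32]
        ring
      have hPx1 : ⟪P,x1⟫ = 0 := by
        simp only [hx1def, inner_add_right, real_inner_smul_right, hPE2, hPE3]; ring
      have hPx2 : ⟪P,x2⟫ = 0 := by
        simp only [hx2def, inner_sub_right, real_inner_smul_right, hPE2, hPE3]; ring
      have hQx1 : ⟪Q,x1⟫ = s*iv := by
        simp only [hx1def, inner_add_right, real_inner_smul_right, hQE2, hQE3]; ring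
      have hQx2 : ⟪Q,x2⟫ = s*iv := by
        simp only [hx2def, inner_sub_right, real_inner_smul_right, hQE2, hQE3]; ring
      have hx1Q : ⟪x1,Q⟫ = s*iv := by rw [real_inner_comm]; exact hQx1
      have hx2Q : ⟪x2,Q⟫ = s*iv := by rw [real_inner_comm]; exact hQx2
      have hσ2 : (s*iv)^2 = s^2/2 := by
        rw [mul_pow, hivdef, hi2]; ring
      have hc2p : (0:ℝ) < c^2 := by positivity
      have hrrarg : (0:ℝ) < 1 - s^2/2 := by linarith only [hcs, hc2p]
      set rr := Real.sqrt (1 - s^2/2) with hrrdef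
      have hrr2 : rr^2 = 1 - s^2/2 := Real.sq_sqrt hrrarg.le
      have hrrpos : 0 < rr := Real.sqrt_pos.2 hrrarg
      set y1 : E3 := rr⁻¹ • cp Q x1 with hy1def
      set y2 : E3 := rr⁻¹ • cp Q x2 with hy2def
      set n1 : E3 := rr⁻¹ • (Q - (s*iv) • x1) with hn1def
      set n2 : E3 := rr⁻¹ • (Q - (s*iv) • x2) with hn2def
      have hcpQx1 : ⟪cp Q x1, cp Q x1⟫ = rr^2 := by
        rw [inner_cp_self, hQQ, hx1x1, hQx1, hrr2]
        linear_combination - hσ2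
      have hcpQx2 : ⟪cp Q x2, cp Q x2⟫ = rr^2 := by
        rw [inner_cp_self, hQQ, hx2x2, hQx2, hrr2]
        linear_combination - hσ2
      have hy1y1 : ⟪y1,y1⟫ = 1 := by rw [hy1def]; exact unit_inv_smul hrrpos hcpQx1
      have hy2y2 : ⟪y2,y2⟫ = 1 := by rw [hy2def]; exact unit_inv_smul hrrpos hcpQx2
      have hsubn1 : ⟪Q - (s*iv) • x1, Q - (s*iv) • x1⟫ = rr^2 := by
        simp only [inner_sub_left, inner_sub_right, real_inner_smul_left,
          real_inner_smul_right, hQQ, hQx1, hx1Q, hx1x1, hrr2]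
        linear_combination - hσ2
      have hsubn2 : ⟪Q - (s*iv) • x2, Q - (s*iv) • x2⟫ = rr^2 := by
        simp only [inner_sub_left, inner_sub_right, real_inner_smul_left,
          real_inner_smul_right, hQQ, hQx2, hx2Q, hx2x2, hrr2]
        linear_combination - hσ2
      have hn1n1 : ⟪n1,n1⟫ = 1 := by rw [hn1def]; exact unit_inv_smul hrrpos hsubn1
      have hn2n2 : ⟪n2,n2⟫ = 1 := by rw [hn2def]; exact unit_inv_smul hrrpos hsubn2
      have hQy1 : ⟪Q,y1⟫ = 0 := by
        rw [hy1def, real_inner_smul_right, real_inner_comm, inner_cp_left]; ring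
      have hQy2 : ⟪Q,y2⟫ = 0 := by
        rw [hy2def, real_inner_smul_right, real_inner_comm, inner_cp_left]; ring
      have hx1y1 : ⟪x1,y1⟫ = 0 := by
        rw [hy1def, real_inner_smul_right, real_inner_comm, inner_cp_right]; ring
      have hx2y2 : ⟪x2,y2⟫ = 0 := by
        rw [hy2def, real_inner_smul_right, real_inner_comm, inner_cp_right]; ring
      have hx1n1 : ⟪x1,n1⟫ = 0 := by
        rw [hn1def, real_inner_smul_right, inner_sub_right, real_inner_smul_right,
          hx1Q, hx1x1]; ring
      have hx2n2 : ⟪x2,n2⟫ = 0 := by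
        rw [hn2def, real_inner_smul_right, inner_sub_right, real_inner_smul_right,
          hx2Q, hx2x2]; ring
      have hy1n1 : ⟪y1,n1⟫ = 0 := by
        rw [hy1def, hn1def, real_inner_smul_left, real_inner_smul_right, inner_sub_right,
          real_inner_smul_right, inner_cp_left, inner_cp_right]; ring
      have hy2n2 : ⟪y2,n2⟫ = 0 := by
        rw [hy2def, hn2def, real_inner_smul_left, real_inner_smul_right, inner_sub_right,
          real_inner_smul_right, inner_cp_left, inner_cp_right]; ring
      have hn1n2 : ⟪n1,n2⟫ = c^2/(1-s^2/2) := by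
        have hsub12 : ⟪Q - (s*iv) • x1, Q - (s*iv) • x2⟫ = c^2 := by
          simp only [inner_sub_left, inner_sub_right, real_inner_smul_left,
            real_inner_smul_right, hQQ, hQx2, hx1Q, hx1x2]
          linear_combination (-2) * hσ2 - hcs
        rw [hn1def, hn2def, real_inner_smul_left, real_inner_smul_right, hsub12,
          eq_div_iff (ne_of_gt hrrarg), ← hrr2]
        field_simp [hrrpos.ne']
      obtain ⟨hγpos, hγle⟩ := step_scalars ε c s hε hc13 hle hs hcs
      have hek : (0:ℝ) ≤ ε^2/6 := by positivity
      have hbound2 : c ≤ 1/3 + ((k:ℝ)+1)*(ε^2/6) := by push_cast at hbound; linarith only [hbound]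
      have hbound' : c^2/(1-s^2/2) ≤ 1/3 + k*(ε^2/6) := by
        linarith only [hbound2, hγle]
      obtain ⟨S', mS'n1, mS'n2, hS'unit, hS'ref⟩ := ih n1 n2 hn1n1 hn2n2
        (by rw [hn1n2]; exact hγpos)
        (by rw [hn1n2]; linarith only [hγle, hle, hek])
        (by rw [hn1n2]; exact hbound')
      set T : Finset E3 :=
        {P, Q, x1, cp P x1, y1, cp Q y1, n1, x2, cp P x2, y2, cp Q y2, n2} with hTdef
      set S : Finset E3 := S' ∪ T with hSdef
      have hsub : S' ⊆ S := Finset.subset_union_left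
      have mem_T : ∀ z ∈ T, z ∈ S := fun z hz => Finset.mem_union_right _ hz
      have mP : P ∈ S := mem_T P (by simp [hTdef])
      have mQ : Q ∈ S := mem_T Q (by simp [hTdef])
      have mx1 : x1 ∈ S := mem_T _ (by simp [hTdef])
      have mPx1 : cp P x1 ∈ S := mem_T _ (by simp [hTdef])
      have my1 : y1 ∈ S := mem_T _ (by simp [hTdef])
      have mQy1 : cp Q y1 ∈ S := mem_T _ (by simp [hTdef])
      have mn1 : n1 ∈ S := mem_T _ (by simp [hTdef])
      have mx2 : x2 ∈ S := mem_T _ (by simp [hTdef])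
      have mPx2 : cp P x2 ∈ S := mem_T _ (by simp [hTdef])
      have my2 : y2 ∈ S := mem_T _ (by simp [hTdef])
      have mQy2 : cp Q y2 ∈ S := mem_T _ (by simp [hTdef])
      have mn2 : n2 ∈ S := mem_T _ (by simp [hTdef])
      refine ⟨S, mP, mQ, ?_, ?_⟩
      · intro z hz
        rw [hSdef] at hz
        rcases Finset.mem_union.mp hz with hz'|hz'
        · exact hS'unit z hz'
        · rw [hTdef] at hz'
          simp only [Finset.mem_insert, Finset.mem_singleton] at hz'
          rcases hz' with rfl|rfl|rfl|rfl|rfl|rfl|rfl|rfl|rfl|rfl|rfl|rfl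
          · exact hPP
          · exact hQQ
          · exact hx1x1
          · rw [inner_cp_self, hPP, hx1x1, hPx1]; ring
          · exact hy1y1
          · rw [inner_cp_self, hQQ, hy1y1, hQy1]; ring
          · exact hn1n1
          · exact hx2x2
          · rw [inner_cp_self, hPP, hx2x2, hPx2]; ring
          · exact hy2y2
          · rw [inner_cp_self, hQQ, hy2y2, hQy2]; ring
          · exact hn2n2
      · intro p hp h1P h1Q
        have hx10 : p x1 = 0 :=
          (force_zero hp mP mx1 mPx1 hPx1 (cp_left' P x1) (cp_right' P x1) h1P).1
        have hy10 : p y1 = 0 :=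
          (force_zero hp mQ my1 mQy1 hQy1 (cp_left' Q y1) (cp_right' Q y1) h1Q).1
        have hn1one : p n1 = 1 := by
          refine force_one hp mn1 mx1 my1 ?_ ?_ hx1y1 hx10 hy10
          · rw [real_inner_comm]; exact hx1n1
          · rw [real_inner_comm]; exact hy1n1
        have hx20 : p x2 = 0 :=
          (force_zero hp mP mx2 mPx2 hPx2 (cp_left' P x2) (cp_right' P x2) h1P).1
        have hy20 : p y2 = 0 :=
          (force_zero hp mQ my2 mQy2 hQy2 (cp_left' Q y2) (cp_right' Q y2) h1Q).1
        have hn2one : p n2 = 1 := by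
          refine force_one hp mn2 mx2 my2 ?_ ?_ hx2y2 hx20 hy20
          · rw [real_inner_comm]; exact hx2n2
          · rw [real_inner_comm]; exact hy2n2
        exact hS'ref p (hp.mono hsub) hn1one hn2one

/-- For unit vectors `a, b` in `ℝ³` with `0 < |⟨a,b⟩| < 1` there is a finite set `Γ`
of unit vectors, closed under negation, containing `a` and `b`, such that every state
`p` on `Γ` with `p a = 1` satisfies `0 < p b < 1`. -/
theorem exists_finset_forcing_intermediate_value
    (a b : EuclideanSpace ℝ (Fin 3)) (ha : ‖a‖ = 1) (hb : ‖b‖ = 1)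
    (hab₀ : 0 < |(inner ℝ a b : ℝ)|) (hab₁ : |(inner ℝ a b : ℝ)| < 1) :
    ∃ Γ : Finset (EuclideanSpace ℝ (Fin 3)),
      (∀ x ∈ Γ, ‖x‖ = 1) ∧ (∀ x ∈ Γ, -x ∈ Γ) ∧ a ∈ Γ ∧ b ∈ Γ ∧
      ∀ p : EuclideanSpace ℝ (Fin 3) → ℝ, IsStateOn Γ p → p a = 1 →
        0 < p b ∧ p b < 1 := by
  classical
  have haa : ⟪a,a⟫ = 1 := by
    rw [real_inner_self_eq_norm_mul_norm, ha]; norm_num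
  have hbb : ⟪b,b⟫ = 1 := by
    rw [real_inner_self_eq_norm_mul_norm, hb]; norm_num
  obtain ⟨b', hb'cases, hab'⟩ :
      ∃ b' : E3, (b' = b ∨ b' = -b) ∧ ⟪a,b'⟫ = |(⟪a,b⟫ : ℝ)| := by
    rcases le_or_gt 0 (⟪a,b⟫ : ℝ) with h|h
    · exact ⟨b, Or.inl rfl, by rw [abs_of_nonneg h]⟩
    · exact ⟨-b, Or.inr rfl, by rw [inner_neg_right, abs_of_neg h]⟩
  set γ : ℝ := |(⟪a,b⟫ : ℝ)| with hγdef
  have hγ0 : 0 < γ := hab₀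
  have hγ1 : γ < 1 := hab₁
  have hb'b' : ⟪b',b'⟫ = 1 := by
    rcases hb'cases with rfl|rfl
    · exact hbb
    · rw [inner_neg_neg]; exact hbb
  have hsarg : 0 < 1 - γ^2 := by nlinarith [hγ0, hγ1]
  set s := Real.sqrt (1 - γ^2) with hsdef
  have hs : 0 < s := Real.sqrt_pos.2 hsarg
  have hcs : γ^2 + s^2 = 1 := by rw [hsdef, Real.sq_sqrt hsarg.le]; ring
  have hγ2p : (0:ℝ) < γ^2 := by positivity
  have hs2lt : s^2 < 1 := by linarith only [hcs, hγ2p]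
  have hs1 : s < 1 := by linarith only [sq_nonneg (s-1), hs2lt, hs]
  obtain ⟨e2, e3, hE22, hE33, hPE2, hPE3, hE23, hQeq, hQE2, hQE3⟩ :=
    exists_frame a b' γ s haa hb'b' hab' hs hcs
  set w : E3 := s • a - γ • e2 with hwdef
  have hww : ⟪w,w⟫ = 1 := by
    simp only [hwdef, inner_sub_left, inner_sub_right, real_inner_smul_left,
      real_inner_smul_right, haa, hE22, hPE2,
      (by rw [real_inner_comm]; exact hPE2 : ⟪e2,a⟫ = (0:ℝ))]
    linear_combination hcs
  have haw : ⟪a,w⟫ = s := by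
    simp only [hwdef, inner_sub_right, real_inner_smul_right, haa, hPE2]; ring
  have hb'w : ⟪b',w⟫ = 0 := by
    rw [hQeq]
    simp only [hwdef, inner_add_left, inner_sub_right, real_inner_smul_left,
      real_inner_smul_right, haa, hE22, hPE2,
      (by rw [real_inner_comm]; exact hPE2 : ⟪e2,a⟫ = (0:ℝ))]
    ring
  have hwe3 : ⟪w,e3⟫ = 0 := by
    simp only [hwdef, inner_sub_left, real_inner_smul_left, hPE3, hE23]; ring
  have hb'e3 : ⟪b',e3⟫ = 0 := hQE3
  have hae3 : ⟪a,e3⟫ = 0 := hPE3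
  -- epsilon and refuters
  set ε := min (1-γ) (1-s) with hεdef
  have hε : 0 < ε := lt_min (by linarith) (by linarith)
  have hεγ : ε ≤ 1-γ := min_le_left _ _
  have hεs : ε ≤ 1-s := min_le_right _ _
  have hε6 : (0:ℝ) < ε^2/6 := by positivity
  obtain ⟨k1, hk1⟩ := exists_nat_ge ((γ - 1/3) / (ε^2/6))
  have hb1 : γ ≤ 1/3 + k1*(ε^2/6) := by
    rw [div_le_iff₀ hε6] at hk1; linarith only [hk1]
  obtain ⟨k2, hk2⟩ := exists_nat_ge ((s - 1/3) / (ε^2/6))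
  have hb2 : s ≤ 1/3 + k2*(ε^2/6) := by
    rw [div_le_iff₀ hε6] at hk2; linarith only [hk2]
  obtain ⟨S₁, mS1a, mS1b', hS1unit, hS1ref⟩ := refuter ε hε k1 a b' haa hb'b'
    (by rw [hab']; exact hγ0) (by rw [hab']; linarith only [hεγ])
    (by rw [hab']; exact hb1)
  obtain ⟨S₂, mS2a, mS2w, hS2unit, hS2ref⟩ := refuter ε hε k2 a w haa hww
    (by rw [haw]; exact hs) (by rw [haw]; linarith only [hεs])
    (by rw [haw]; exact hb2)
  -- the big set
  set L : Finset E3 := {a, b, b', w, e3, cp a e3} with hLdef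
  set T : Finset E3 := S₁ ∪ S₂ ∪ L with hTdef
  set Γ : Finset E3 := T ∪ T.image (fun v => -v) with hΓdef
  have hTsub : T ⊆ Γ := Finset.subset_union_left
  have hS1sub : S₁ ⊆ Γ := by
    refine Finset.Subset.trans ?_ hTsub
    rw [hTdef]
    exact Finset.Subset.trans Finset.subset_union_left Finset.subset_union_left
  have hS2sub : S₂ ⊆ Γ := by
    refine Finset.Subset.trans ?_ hTsub
    rw [hTdef]
    exact Finset.Subset.trans Finset.subset_union_right Finset.subset_union_left
  have hLsub : L ⊆ Γ := by
    refine Finset.Subset.trans ?_ hTsub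
    rw [hTdef]
    exact Finset.subset_union_right
  have ma : a ∈ Γ := hLsub (by simp [hLdef])
  have mb : b ∈ Γ := hLsub (by simp [hLdef])
  have mb' : b' ∈ Γ := hLsub (by simp [hLdef])
  have mw : w ∈ Γ := hLsub (by simp [hLdef])
  have me3 : e3 ∈ Γ := hLsub (by simp [hLdef])
  have mcae3 : cp a e3 ∈ Γ := hLsub (by simp [hLdef])
  have hTunit : ∀ x ∈ T, ⟪x,x⟫ = (1:ℝ) := by
    intro z hz
    rw [hTdef] at hz
    rcases Finset.mem_union.mp hz with hz'|hz'
    · rcases Finset.mem_union.mp hz' with hz''|hz''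
      · exact hS1unit z hz''
      · exact hS2unit z hz''
    · rw [hLdef] at hz'
      simp only [Finset.mem_insert, Finset.mem_singleton] at hz'
      rcases hz' with rfl|rfl|rfl|rfl|rfl|rfl
      · exact haa
      · exact hbb
      · exact hb'b'
      · exact hww
      · exact hE33
      · rw [inner_cp_self, haa, hE33, hae3]; ring
  refine ⟨Γ, ?_, ?_, ma, mb, ?_⟩
  · intro z hz
    rw [hΓdef] at hz
    rcases Finset.mem_union.mp hz with hz'|hz'
    · exact norm_of_inner_one (hTunit z hz')
    · obtain ⟨v, hv, rfl⟩ := Finset.mem_image.mp hz'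
      refine norm_of_inner_one ?_
      rw [inner_neg_neg]
      exact hTunit v hv
  · intro z hz
    rw [hΓdef] at hz
    rcases Finset.mem_union.mp hz with hz'|hz'
    · exact Finset.mem_union_right _ (Finset.mem_image_of_mem _ hz')
    · obtain ⟨v, hv, rfl⟩ := Finset.mem_image.mp hz'
      rw [neg_neg]
      exact hTsub hv
  · intro p hp hpa
    have hf0 : p e3 = 0 :=
      (force_zero hp ma me3 mcae3 hae3 (cp_left' a e3) (cp_right' a e3) hpa).1
    have hsum : p b' + p w + p e3 = 1 :=
      state_triple hp mb' mw me3 hb'w hb'e3 hwe3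
    have hb'ge : 0 ≤ p b' := hp.1 b' mb'
    have hwge : 0 ≤ p w := hp.1 w mw
    have hb'ne : p b' ≠ 1 := fun h => hS1ref p (hp.mono hS1sub) hpa h
    have hwne : p w ≠ 1 := fun h => hS2ref p (hp.mono hS2sub) hpa h
    have hb'lt : p b' < 1 := lt_of_le_of_ne (by linarith only [hsum, hf0, hwge]) hb'ne
    have hwlt : p w < 1 := lt_of_le_of_ne (by linarith only [hsum, hf0, hb'ge]) hwne
    have hb'pos : 0 < p b' := by linarith only [hsum, hf0, hwlt]
    have hpb : p b = p b' := by
      rcases hb'cases with rfl|rfl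
      · rfl
      · exact (hp.2.1 b mb).symm
    rw [hpb]
    exact ⟨hb'pos, hb'lt⟩

end KSProof
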